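/- Let d ≥ 3, k > 0. Then k₀₀ = kd(d-2)/(d-1) is exactly the threshold at which the local critical parameter λ_s*(k₀₀) = ((d-2)k₀₀ + d√(k₀₀²+4k²))/(2((dk)² + (d-1)k₀₀²)) equals the global value 1/(kd): for k₀₀ in the range (k(d-2)/√(d-1), kd(d-2)/(d-1)) one has λ_s*(k₀₀) > 1/(kd), with equality λ_s*(k₀₀) = 1/(kd) at k₀₀ = kd(d-2)/(d-1), and λ_s*(k₀₀) < 1/(kd) for k₀₀ > kd(d-2)/(d-1). -/
import Mathlib


open Real

/-- `k₀₀ = kd(d-2)/(d-1)` is exactly the threshold at which the local critical parameter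
`λ_s*(k₀₀)` of the loop-modified tree BRW equals the global value `1/(kd)`. -/
theorem tree_loop_threshold (d : ℕ) (hd : 3 ≤ d) (k : ℝ) (hk : 0 < k) :
    let lstar : ℝ → ℝ := fun k₀₀ =>
      (((d : ℝ) - 2) * k₀₀ + (d : ℝ) * Real.sqrt (k₀₀ ^ 2 + 4 * k ^ 2)) /
        (2 * (((d : ℝ) * k) ^ 2 + ((d : ℝ) - 1) * k₀₀ ^ 2))
    (∀ k₀₀ : ℝ, k * ((d : ℝ) - 2) / Real.sqrt ((d : ℝ) - 1) < k₀₀ →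
      k₀₀ < k * (d : ℝ) * ((d : ℝ) - 2) / ((d : ℝ) - 1) →
      1 / (k * (d : ℝ)) < lstar k₀₀) ∧
    lstar (k * (d : ℝ) * ((d : ℝ) - 2) / ((d : ℝ) - 1)) = 1 / (k * (d : ℝ)) ∧
    (∀ k₀₀ : ℝ, k * (d : ℝ) * ((d : ℝ) - 2) / ((d : ℝ) - 1) < k₀₀ →
      lstar k₀₀ < 1 / (k * (d : ℝ))) := by
  intro lstar
  have hD : (3:ℝ) ≤ (d:ℝ) := by exact_mod_cast hd
  set D : ℝ := (d:ℝ) with hDdef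
  have hD1 : 0 < D - 1 := by linarith
  have hD2 : 0 < D - 2 := by linarith
  have hD0 : 0 < D := by linarith
  have hkD : 0 < k * D := mul_pos hk hD0
  refine ⟨?_, ?_, ?_⟩
  · -- below threshold
    intro x hx1 hx2
    have hx0 : 0 < x := lt_trans (by positivity) hx1
    have hs0 : 0 < Real.sqrt (x ^ 2 + 4 * k ^ 2) := Real.sqrt_pos.2 (by positivity)
    set s := Real.sqrt (x ^ 2 + 4 * k ^ 2) with hsdef
    have hs2 : s ^ 2 = x ^ 2 + 4 * k ^ 2 := Real.sq_sqrt (by positivity)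
    have hden : 0 < 2 * ((D * k) ^ 2 + (D - 1) * x ^ 2) := by
      have h1 : 0 < (D * k) ^ 2 := by positivity
      nlinarith [sq_nonneg x]
    have hxlt : (D - 1) * x < k * D * (D - 2) := by
      have := (lt_div_iff₀ hD1).1 hx2
      linarith
    set R : ℝ := 2 * ((D * k) ^ 2 + (D - 1) * x ^ 2) - k * D * (D - 2) * x with hRdef
    clear_value R
    have hfac : (k * D ^ 2) ^ 2 * (x ^ 2 + 4 * k ^ 2) - R ^ 2
        = 4 * x * (k * D * (D - 2) - (D - 1) * x) * ((D - 1) * x ^ 2 + k ^ 2 * D ^ 2) := by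
      rw [hRdef]; ring
    have hfpos : 0 < 4 * x * (k * D * (D - 2) - (D - 1) * x) * ((D - 1) * x ^ 2 + k ^ 2 * D ^ 2) := by
      apply mul_pos (mul_pos (by linarith) (by linarith))
      positivity
    have hkey : R ^ 2 < (k * D ^ 2 * s) ^ 2 := by
      have h1 : (k * D ^ 2 * s) ^ 2 = (k * D ^ 2) ^ 2 * (x ^ 2 + 4 * k ^ 2) := by
        rw [mul_pow, hs2]
      linarith
    have hR : R < k * D ^ 2 * s := by
      have hpos : 0 ≤ k * D ^ 2 * s := by positivity
      exact lt_of_pow_lt_pow_left₀ 2 hpos hkey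
    show 1 / (k * D) < ((D - 2) * x + D * s) / (2 * ((D * k) ^ 2 + (D - 1) * x ^ 2))
    rw [div_lt_div_iff₀ hkD hden]
    linarith [hR, hRdef]
  · -- equality at threshold
    set x := k * D * (D - 2) / (D - 1) with hxdef
    have hsq : x ^ 2 + 4 * k ^ 2 = (k * (D ^ 2 - 2 * D + 2) / (D - 1)) ^ 2 := by
      rw [hxdef]
      field_simp
      ring
    have hs : Real.sqrt (x ^ 2 + 4 * k ^ 2) = k * (D ^ 2 - 2 * D + 2) / (D - 1) := by
      rw [hsq]
      apply Real.sqrt_sq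
      apply div_nonneg _ (le_of_lt hD1)
      nlinarith [sq_nonneg (D - 1)]
    have hden : 0 < 2 * ((D * k) ^ 2 + (D - 1) * x ^ 2) := by
      have h1 : 0 < (D * k) ^ 2 := by positivity
      nlinarith [sq_nonneg x]
    show ((D - 2) * x + D * Real.sqrt (x ^ 2 + 4 * k ^ 2)) /
        (2 * ((D * k) ^ 2 + (D - 1) * x ^ 2)) = 1 / (k * D)
    rw [hs, div_eq_div_iff hden.ne' hkD.ne', hxdef]
    field_simp
    ring
  · -- above threshold
    intro x hx2
    have hx0 : 0 < x := lt_trans (by positivity) hx2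
    have hs0 : 0 < Real.sqrt (x ^ 2 + 4 * k ^ 2) := Real.sqrt_pos.2 (by positivity)
    set s := Real.sqrt (x ^ 2 + 4 * k ^ 2) with hsdef
    have hs2 : s ^ 2 = x ^ 2 + 4 * k ^ 2 := Real.sq_sqrt (by positivity)
    have hden : 0 < 2 * ((D * k) ^ 2 + (D - 1) * x ^ 2) := by
      have h1 : 0 < (D * k) ^ 2 := by positivity
      nlinarith [sq_nonneg x]
    have hxgt : k * D * (D - 2) < (D - 1) * x := by
      have := (div_lt_iff₀ hD1).1 hx2
      linarith
    set R : ℝ := 2 * ((D * k) ^ 2 + (D - 1) * x ^ 2) - k * D * (D - 2) * x with hRdef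
    clear_value R
    have hRpos : 0 < R := by
      rw [hRdef]
      nlinarith [mul_lt_mul_of_pos_left hxgt hx0, sq_nonneg (D * k)]
    have hfac : (k * D ^ 2) ^ 2 * (x ^ 2 + 4 * k ^ 2) - R ^ 2
        = 4 * x * (k * D * (D - 2) - (D - 1) * x) * ((D - 1) * x ^ 2 + k ^ 2 * D ^ 2) := by
      rw [hRdef]; ring
    have hfneg : 4 * x * (k * D * (D - 2) - (D - 1) * x) * ((D - 1) * x ^ 2 + k ^ 2 * D ^ 2) < 0 := by
      apply mul_neg_of_neg_of_pos
      · apply mul_neg_of_pos_of_neg (by linarith)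
        linarith
      · positivity
    have hkey : (k * D ^ 2 * s) ^ 2 < R ^ 2 := by
      have h1 : (k * D ^ 2 * s) ^ 2 = (k * D ^ 2) ^ 2 * (x ^ 2 + 4 * k ^ 2) := by
        rw [mul_pow, hs2]
      linarith
    have hR : k * D ^ 2 * s < R := lt_of_pow_lt_pow_left₀ 2 (le_of_lt hRpos) hkey
    show ((D - 2) * x + D * s) / (2 * ((D * k) ^ 2 + (D - 1) * x ^ 2)) < 1 / (k * D)
    rw [div_lt_div_iff₀ hden hkD]
    linarith [hR, hRdef]
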